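/- Let R > 1, d > 0, h₀ ∈ ℝ, and let Ω ⊆ ℂ be open. Let u : Ω → ℝ be C², let f : A(1/R,R) → Ω be a Euclidean harmonic (f_{zz̄} = 0) homeomorphism of A(1/R,R) onto Ω, and set h = u ∘ f. Assume: (i) h is harmonic (Δh = 0) on A(1/R,R); (ii) χ(z) = (f(z), h(z)) : A(1/R,R) → ℝ² × ℝ is conformal, i.e. |f_x|² + h_x² = |f_y|² + h_y² and ⟨f_x, f_y⟩ + h_x·h_y = 0 on A(1/R,R) (here f_x, f_y ∈ ℂ ≅ ℝ²); (iii) h extends continuously to the closed annulus with h ≡ h₀ on |z| = 1/R and h ≡ h₀ + d on |z| = R. Then h(z) = h₀ + d/2 + (d/log R²)·log|z| for all z, and f_z(z)·conj(f_{z̄}(z)) = c/z² with c = −d²/(4·(log R²)²) < 0; moreover u(w) = h₀ + d/2 + 2√(−c)·log|f⁻¹(w)| for all w ∈ Ω. -/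

import Mathlib

open Complex Metric MeasureTheory

/-- Wirtinger derivative ∂f/∂z = (f_x - i f_y)/2. -/
noncomputable def wz (f : ℂ → ℂ) (z : ℂ) : ℂ :=
  (fderiv ℝ f z 1 - Complex.I * fderiv ℝ f z Complex.I) / 2

/-- Wirtinger derivative ∂f/∂z̄ = (f_x + i f_y)/2. -/
noncomputable def wzbar (f : ℂ → ℂ) (z : ℂ) : ℂ :=
  (fderiv ℝ f z 1 + Complex.I * fderiv ℝ f z Complex.I) / 2

/-- Euclidean Laplacian of a real-valued function on ℂ. -/
noncomputable def lap (u : ℂ → ℝ) (z : ℂ) : ℝ :=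
  fderiv ℝ (fun w => fderiv ℝ u w 1) z 1 +
  fderiv ℝ (fun w => fderiv ℝ u w Complex.I) z Complex.I

/-- ∂_w u = (u_x - i u_y)/2 for a real-valued u, as a complex number. -/
noncomputable def dw (u : ℂ → ℝ) (w : ℂ) : ℂ :=
  ((fderiv ℝ u w 1 : ℝ) - Complex.I * (fderiv ℝ u w Complex.I : ℝ)) / 2

/-- f is ℘-harmonic on D: f_{zz̄} + 2 (∂_w log ℘)∘f · f_z · f_{z̄} = 0. -/
def PHarmOn (p : ℂ → ℝ) (f : ℂ → ℂ) (D : Set ℂ) : Prop :=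
  ∀ z ∈ D,
    wzbar (fun w => wz f w) z
      + 2 * dw (fun w => Real.log (p w)) (f z) * wz f z * wzbar f z = 0

/-- |∇u|² for a real-valued u on ℂ. -/
noncomputable def gradSq (u : ℂ → ℝ) (w : ℂ) : ℝ :=
  (fderiv ℝ u w 1) ^ 2 + (fderiv ℝ u w Complex.I) ^ 2

/-- The ℘-minimal surface equation div(∇ω/√(1+|∇ω|²/℘²)) = 0 on Ω. -/
def MinSurfEq (p : ℂ → ℝ) (ω : ℂ → ℝ) (Ω : Set ℂ) : Prop :=
  ∀ w ∈ Ω,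
    fderiv ℝ (fun v => fderiv ℝ ω v 1 / Real.sqrt (1 + gradSq ω v / (p v) ^ 2)) w 1 +
    fderiv ℝ (fun v => fderiv ℝ ω v Complex.I / Real.sqrt (1 + gradSq ω v / (p v) ^ 2)) w
      Complex.I = 0

/-- The annulus {z : r < |z| < R}. -/
def Ann (r R : ℝ) : Set ℂ := {z : ℂ | r < ‖z‖ ∧ ‖z‖ < R}



lemma clm_eval {M : Type*} [NormedAddCommGroup M] [NormedSpace ℝ M]
    (L : ℂ →L[ℝ] M) (v : ℂ) : L v = v.re • L 1 + v.im • L I := by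
  have hv : v = v.re • (1:ℂ) + v.im • I := by simp [Complex.real_smul]
  conv_lhs => rw [hv]
  rw [map_add, L.map_smul, L.map_smul]

lemma hol_of_cr {F : ℂ → ℂ} {z : ℂ} {L : ℂ →L[ℝ] ℂ} (hF : HasFDerivAt F L z)
    (hCR : L I = I * L 1) : DifferentiableAt ℂ F z := by
  refine (hasFDerivAt_of_restrictScalars ℝ (f' := (L 1) • (1 : ℂ →L[ℂ] ℂ)) hF ?_).differentiableAt
  ext v
  simp only [ContinuousLinearMap.coe_restrictScalars', ContinuousLinearMap.smul_apply,
    ContinuousLinearMap.one_apply, smul_eq_mul]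
  rw [clm_eval L v, hCR, Complex.real_smul, Complex.real_smul]
  conv_lhs => rw [← Complex.re_add_im v]
  ring

lemma hopf_alg (A B : ℂ) (p q : ℝ)
    (h1 : ‖A‖ ^ 2 + p ^ 2 = ‖B‖ ^ 2 + q ^ 2)
    (h2 : (A * (starRingEnd ℂ) B).re + p * q = 0) :
    (A - I*B)/2 * (starRingEnd ℂ) ((A + I*B)/2) = -(((p:ℝ) : ℂ) - I*q)^2/4 := by
  have h1' : A.re^2 + A.im^2 + p^2 = B.re^2 + B.im^2 + q^2 := by
    have := h1
    rw [Complex.sq_norm, Complex.sq_norm, Complex.normSq_apply, Complex.normSq_apply] at this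
    nlinarith [this]
  have h2' : A.re*B.re + A.im*B.im + p*q = 0 := by
    simpa [Complex.mul_re] using h2
  rw [show (((p:ℝ):ℂ) - I*q)^2 = (((p^2 - q^2 : ℝ)):ℂ) - ((2*p*q : ℝ):ℂ)*I from by
    apply Complex.ext <;> simp [Complex.mul_re, Complex.mul_im, pow_two] <;> ring]
  apply Complex.ext <;>
    simp [Complex.mul_re, Complex.mul_im, Complex.div_re, Complex.div_im,
      Complex.normSq_apply, ← Complex.ofReal_pow] <;> ring_nf <;> nlinarith [h1', h2']
/-- derivative of z ↦ log |z| -/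
lemma hasFDerivAt_logabs {z : ℂ} (hz : z ≠ 0) :
    HasFDerivAt (fun w => Real.log (‖w‖))
      ((Complex.normSq z)⁻¹ • (z.re • Complex.reCLM + z.im • Complex.imCLM)) z := by
  have hzn : Complex.normSq z ≠ 0 := by simpa [Complex.normSq_eq_zero] using hz
  have hre := (Complex.reCLM.hasFDerivAt (x := z)).mul (Complex.reCLM.hasFDerivAt (x := z))
  have him := (Complex.imCLM.hasFDerivAt (x := z)).mul (Complex.imCLM.hasFDerivAt (x := z))
  have hns' : HasFDerivAt Complex.normSq
      (Complex.reCLM z • Complex.reCLM + Complex.reCLM z • Complex.reCLM +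
        (Complex.imCLM z • Complex.imCLM + Complex.imCLM z • Complex.imCLM)) z := by
    refine (hre.add him).congr_of_eventuallyEq ?_
    filter_upwards with w
    simp [Complex.normSq_apply]
  have hlog := (Real.hasDerivAt_log hzn).comp_hasFDerivAt z hns'
  have h2 := hlog.const_mul (2⁻¹ : ℝ)
  have heq : (fun w : ℂ => Real.log (‖w‖)) =ᶠ[nhds z]
      (fun w => 2⁻¹ * (Real.log ∘ Complex.normSq) w) := by
    filter_upwards with w
    rw [Complex.norm_def, Real.log_sqrt (Complex.normSq_nonneg w)]
    simp [Function.comp]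
    ring
  refine (h2.congr_of_eventuallyEq heq).congr_fderiv ?_
  ext v <;> simp [Complex.normSq_apply] <;> ring
lemma circle_avg_const {s : Set ℂ} (hs : IsOpen s) {k : ℂ → ℝ} (hk : ContDiffOn ℝ 2 k s)
    {F : ℂ → ℂ} (hF : DifferentiableOn ℂ F s)
    (hFk : ∀ z ∈ s, F z = ((fderiv ℝ k z 1 : ℝ) : ℂ) - Complex.I * (fderiv ℝ k z Complex.I : ℝ))
    {c : ℂ} {ρ : ℝ} (hρ : 0 < ρ) (hsub : closedBall c ρ ⊆ s) :
    ∀ r, 0 < r → r ≤ ρ →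
      (∫ θ in (0:ℝ)..(2*Real.pi), k (circleMap c r θ)) = 2*Real.pi * k c := by
  have hkd : DifferentiableOn ℝ k s := hk.differentiableOn two_ne_zero
  have hkc : ContinuousOn k s := hkd.continuousOn
  have hfc : ContinuousOn (fderiv ℝ k) s := hk.continuousOn_fderiv_of_isOpen hs one_le_two
  have hmem : ∀ {r : ℝ} (θ : ℝ), 0 ≤ r → r ≤ ρ → circleMap c r θ ∈ s := by
    intro r θ h0 h1
    exact hsub ((closedBall_subset_closedBall h1) (circleMap_mem_closedBall c h0 θ))
  set G : ℝ → ℝ → ℝ := fun r θ => (fderiv ℝ k (circleMap c r θ)) (circleMap 0 1 θ) with hG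
  -- continuity of G on suitable sets
  have hcurve : Continuous (fun p : ℝ × ℝ => circleMap c p.2 p.1) := by
    simp only [circleMap]; fun_prop
  have hGcont : ∀ {r₁ r₂ : ℝ}, 0 < r₁ → r₂ ≤ ρ →
      ContinuousOn (fun p : ℝ × ℝ => G p.2 p.1) ((Set.Icc 0 (2*Real.pi)) ×ˢ (Set.Icc r₁ r₂)) := by
    intro r₁ r₂ h1 h2
    refine ContinuousOn.clm_apply ?_ ((continuous_circleMap 0 1).comp continuous_fst).continuousOn
    refine hfc.comp hcurve.continuousOn ?_
    rintro ⟨θ, r⟩ ⟨_, hr⟩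
    exact hmem θ (le_trans h1.le hr.1) (le_trans hr.2 h2)
  -- Step A : for each radius, the angular integral of the radial derivative vanishes
  have stepA : ∀ {r : ℝ}, 0 < r → r ≤ ρ → (∫ θ in (0:ℝ)..(2*Real.pi), G r θ) = 0 := by
    intro r hr hrρ
    have hsub' : closedBall c r ⊆ s := fun x hx =>
      hsub (closedBall_subset_closedBall hrρ hx)
    have hO : (∮ z in C(c, r), F z) = 0 := by
      refine Complex.circleIntegral_eq_zero_of_differentiable_on_off_countable hr.le
        Set.countable_empty (hF.continuousOn.mono hsub') ?_
      intro z hz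
      exact (hF z (hsub' (ball_subset_closedBall hz.1))).differentiableAt
        (hs.mem_nhds (hsub' (ball_subset_closedBall hz.1)))
    simp only [circleIntegral, deriv_circleMap] at hO
    have hWc : Continuous (fun θ : ℝ => (circleMap 0 r θ * Complex.I) • F (circleMap c r θ)) := by
      refine ((continuous_circleMap 0 r).mul continuous_const).smul ?_
      exact hF.continuousOn.comp_continuous (continuous_circleMap c r)
        (fun θ => hmem θ hr.le hrρ)
    have him : (∫ θ in (0:ℝ)..(2*Real.pi),
        ((circleMap 0 r θ * Complex.I) • F (circleMap c r θ)).im) = 0 := by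
      have hcc := Complex.imCLM.intervalIntegral_comp_comm (μ := volume) (hWc.intervalIntegrable 0 (2*Real.pi))
      simp only [Complex.imCLM_apply] at hcc
      rw [hcc, hO]
      simp
    -- identify the imaginary part with r * G r θ
    have hid : ∀ θ : ℝ, ((circleMap 0 r θ * Complex.I) • F (circleMap c r θ)).im = r * G r θ := by
      intro θ
      have hp : circleMap c r θ ∈ s := hmem θ hr.le hrρ
      rw [hFk _ hp]
      show _ = r * ((fderiv ℝ k (circleMap c r θ)) (circleMap 0 1 θ))
      rw [clm_eval (fderiv ℝ k (circleMap c r θ)) (circleMap 0 1 θ)]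
      simp only [smul_eq_mul, circleMap, Complex.ofReal_one, one_mul, zero_add,
        Complex.exp_ofReal_mul_I_re, Complex.exp_ofReal_mul_I_im, smul_eq_mul]
      simp [Complex.mul_im, Complex.mul_re, Complex.exp_ofReal_mul_I_re,
        Complex.exp_ofReal_mul_I_im]
      ring
    rw [intervalIntegral.integral_congr (fun θ _ => hid θ)] at him
    rw [intervalIntegral.integral_const_mul] at him
    rcases mul_eq_zero.1 him with h | h
    · exact absurd h hr.ne'
    · exact h
  -- Step B : fundamental theorem of calculus in the radial direction
  have stepB : ∀ {r₁ r₂ : ℝ} (θ : ℝ), 0 < r₁ → r₁ ≤ r₂ → r₂ ≤ ρ →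
      k (circleMap c r₂ θ) - k (circleMap c r₁ θ) = ∫ r in r₁..r₂, G r θ := by
    intro r₁ r₂ θ h1 h12 h2ρ
    have huIcc : Set.uIcc r₁ r₂ = Set.Icc r₁ r₂ := Set.uIcc_of_le h12
    refine (intervalIntegral.integral_eq_sub_of_hasDerivAt (f := fun r => k (circleMap c r θ)) ?_ ?_).symm
    · intro x hx
      rw [huIcc] at hx
      have hxpos : 0 < x := lt_of_lt_of_le h1 hx.1
      have hxρ : x ≤ ρ := le_trans hx.2 h2ρ
      have hp : circleMap c x θ ∈ s := hmem θ hxpos.le hxρ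
      have hcur : HasDerivAt (fun r : ℝ => circleMap c r θ) (Complex.exp (θ * Complex.I)) x := by
        simp only [circleMap]
        have h0 : HasDerivAt (fun r : ℝ => (r : ℂ)) 1 x := by
          simpa using (hasDerivAt_id x).ofReal_comp
        simpa using (h0.mul_const (Complex.exp (θ * Complex.I))).const_add c
      have hkp : HasFDerivAt k (fderiv ℝ k (circleMap c x θ)) (circleMap c x θ) :=
        ((hkd _ hp).differentiableAt (hs.mem_nhds hp)).hasFDerivAt
      have := hkp.comp_hasDerivAt x hcur
      simpa [hG, circleMap, Function.comp_def] using this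
    · have hcr : Continuous (fun r : ℝ => circleMap c r θ) := by
        simp only [circleMap]; fun_prop
      have hcont : ContinuousOn (fun r => G r θ) (Set.uIcc r₁ r₂) := by
        rw [huIcc]
        refine ContinuousOn.clm_apply ?_ continuousOn_const
        exact hfc.comp hcr.continuousOn
          (fun r hr => hmem θ (le_trans h1.le hr.1) (le_trans hr.2 h2ρ))
      exact hcont.intervalIntegrable
  -- continuity of the circle average integrand
  have hkcirc : ∀ {r : ℝ}, 0 ≤ r → r ≤ ρ → Continuous (fun θ => k (circleMap c r θ)) := by
    intro r h0 h1
    exact hkc.comp_continuous (continuous_circleMap c r) (fun θ => hmem θ h0 h1)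
  -- Step C : the circle average is independent of the radius
  have h2π : (0:ℝ) ≤ 2*Real.pi := by positivity
  have stepC : ∀ {r₁ r₂ : ℝ}, 0 < r₁ → r₁ ≤ r₂ → r₂ ≤ ρ →
      (∫ θ in (0:ℝ)..(2*Real.pi), k (circleMap c r₂ θ)) =
      (∫ θ in (0:ℝ)..(2*Real.pi), k (circleMap c r₁ θ)) := by
    intro r₁ r₂ h1 h12 h2ρ
    have hi2 : IntervalIntegrable (fun θ => k (circleMap c r₂ θ)) volume 0 (2*Real.pi) :=
      (hkcirc (le_trans h1.le h12) h2ρ).intervalIntegrable 0 (2*Real.pi)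
    have hi1 : IntervalIntegrable (fun θ => k (circleMap c r₁ θ)) volume 0 (2*Real.pi) :=
      (hkcirc h1.le (le_trans h12 h2ρ)).intervalIntegrable 0 (2*Real.pi)
    have hdiff := intervalIntegral.integral_sub hi2 hi1
    have key : (∫ θ in (0:ℝ)..(2*Real.pi),
        (k (circleMap c r₂ θ) - k (circleMap c r₁ θ))) = 0 := by
      have hcongr : ∀ θ ∈ Set.uIcc (0:ℝ) (2*Real.pi),
          k (circleMap c r₂ θ) - k (circleMap c r₁ θ) = ∫ r in r₁..r₂, G r θ :=
        fun θ _ => stepB θ h1 h12 h2ρ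
      rw [intervalIntegral.integral_congr hcongr, intervalIntegral.integral_of_le h2π]
      have hinner : ∀ θ, (∫ r in r₁..r₂, G r θ) = ∫ r in Set.Ioc r₁ r₂, G r θ := fun θ =>
        intervalIntegral.integral_of_le h12
      simp_rw [hinner]
      have hint : Integrable (Function.uncurry (fun θ r => G r θ))
          ((volume.restrict (Set.Ioc (0:ℝ) (2*Real.pi))).prod
            (volume.restrict (Set.Ioc r₁ r₂))) := by
        rw [Measure.prod_restrict]
        refine MeasureTheory.IntegrableOn.mono_set ?_
          (Set.prod_mono Set.Ioc_subset_Icc_self Set.Ioc_subset_Icc_self)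
        exact ContinuousOn.integrableOn_compact (isCompact_Icc.prod isCompact_Icc)
          (hGcont h1 h2ρ)
      rw [MeasureTheory.integral_integral_swap hint]
      have hzero : ∀ r ∈ Set.Ioc r₁ r₂, (∫ θ in Set.Ioc (0:ℝ) (2*Real.pi), G r θ) = 0 := by
        intro r hr
        rw [← intervalIntegral.integral_of_le h2π]
        exact stepA (h1.trans hr.1) (hr.2.trans h2ρ)
      rw [MeasureTheory.setIntegral_congr_fun measurableSet_Ioc hzero]
      simp
    rw [hdiff] at key
    linarith
  -- Step D : limit of the circle average as the radius tends to 0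
  obtain ⟨C, hC⟩ := (isCompact_closedBall c ρ).exists_bound_of_continuousOn (hkc.mono hsub)
  have hmem2 : ∀ {r : ℝ} (θ : ℝ), 0 ≤ r → r ≤ ρ → circleMap c r θ ∈ closedBall c ρ :=
    fun {r} θ h0 h1 => closedBall_subset_closedBall h1 (circleMap_mem_closedBall c h0 θ)
  have stepD : Filter.Tendsto (fun r => ∫ θ in (0:ℝ)..(2*Real.pi), k (circleMap c r θ))
      (nhdsWithin 0 (Set.Ioi 0)) (nhds (∫ _θ in (0:ℝ)..(2*Real.pi), k c)) := by
    refine intervalIntegral.tendsto_integral_filter_of_dominated_convergence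
      (fun _ => C) ?_ ?_ ?_ ?_
    · filter_upwards [Ioo_mem_nhdsGT_of_mem (Set.left_mem_Ico.2 hρ)] with r hr
      exact ((hkcirc hr.1.le hr.2.le).aestronglyMeasurable).restrict
    · filter_upwards [Ioo_mem_nhdsGT_of_mem (Set.left_mem_Ico.2 hρ)] with r hr
      refine Filter.Eventually.of_forall (fun θ _ => ?_)
      exact hC _ (hmem2 θ hr.1.le hr.2.le)
    · exact intervalIntegrable_const
    · refine Filter.Eventually.of_forall (fun θ _ => ?_)
      have h1 : Continuous (fun r : ℝ => circleMap c r θ) := by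
        simp only [circleMap]; fun_prop
      have h2 : Filter.Tendsto (fun r : ℝ => circleMap c r θ)
          (nhdsWithin 0 (Set.Ioi 0)) (nhds c) := by
        have h3 := (h1.tendsto 0).mono_left (nhdsWithin_le_nhds (s := Set.Ioi (0:ℝ)))
        simpa [circleMap] using h3
      have hkat : ContinuousAt k c :=
        hkc.continuousAt (hs.mem_nhds (hsub (mem_closedBall_self hρ.le)))
      exact hkat.tendsto.comp h2
  -- Step E : conclusion
  intro r hr hrρ
  have hconst : ∀ᶠ r' in nhdsWithin (0:ℝ) (Set.Ioi 0),
      (∫ θ in (0:ℝ)..(2*Real.pi), k (circleMap c r θ)) =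
      (∫ θ in (0:ℝ)..(2*Real.pi), k (circleMap c r' θ)) := by
    filter_upwards [Ioo_mem_nhdsGT_of_mem (Set.left_mem_Ico.2 hr)] with r' hr'
    exact stepC hr'.1 hr'.2.le hrρ
  have h2 : Filter.Tendsto (fun _ : ℝ => (∫ θ in (0:ℝ)..(2*Real.pi), k (circleMap c r θ)))
      (nhdsWithin (0:ℝ) (Set.Ioi 0))
      (nhds (∫ θ in (0:ℝ)..(2*Real.pi), k (circleMap c r θ))) := tendsto_const_nhds
  have huniq := tendsto_nhds_unique (h2.congr' hconst) stepD
  rw [intervalIntegral.integral_const] at huniq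
  rw [huniq]
  simp [smul_eq_mul]
lemma annulus_weak_max {r R : ℝ} (hr : 0 < r) (hrR : r < R) {k : ℂ → ℝ}
    (hkc : ContinuousOn k {z : ℂ | r ≤ ‖z‖ ∧ ‖z‖ ≤ R})
    (hk2 : ContDiffOn ℝ 2 k {z : ℂ | r < ‖z‖ ∧ ‖z‖ < R})
    {F : ℂ → ℂ}
    (hF : DifferentiableOn ℂ F {z : ℂ | r < ‖z‖ ∧ ‖z‖ < R})
    (hFk : ∀ z ∈ {z : ℂ | r < ‖z‖ ∧ ‖z‖ < R},
      F z = ((fderiv ℝ k z 1 : ℝ) : ℂ) - Complex.I * (fderiv ℝ k z Complex.I : ℝ))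
    (hin : ∀ z : ℂ, ‖z‖ = r → k z = 0)
    (hout : ∀ z : ℂ, ‖z‖ = R → k z = 0) :
    ∀ z ∈ {z : ℂ | r ≤ ‖z‖ ∧ ‖z‖ ≤ R}, k z ≤ 0 := by
  set A : Set ℂ := {z : ℂ | r < ‖z‖ ∧ ‖z‖ < R} with hA
  set K : Set ℂ := {z : ℂ | r ≤ ‖z‖ ∧ ‖z‖ ≤ R} with hK
  have hAopen : IsOpen A := by
    have h : A = (fun z : ℂ => ‖z‖) ⁻¹' (Set.Ioo r R) := rfl
    rw [h]
    exact isOpen_Ioo.preimage continuous_norm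
  have hAK : A ⊆ K := fun z hz => ⟨hz.1.le, hz.2.le⟩
  have hKcpt : IsCompact K := by
    refine Metric.isCompact_of_isClosed_isBounded ?_ ?_
    · have h : K = (fun z : ℂ => ‖z‖) ⁻¹' (Set.Icc r R) := rfl
      rw [h]
      exact isClosed_Icc.preimage continuous_norm
    · refine (Metric.isBounded_closedBall (x := (0:ℂ)) (r := R)).subset ?_
      intro z hz
      simp only [mem_closedBall, Complex.dist_eq, sub_zero]
      exact hz.2
  have hconn : IsPreconnected A := by
    have h1 : IsPreconnected ((Set.Ioo r R) ×ˢ (sphere (0:ℂ) 1)) :=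
      isPreconnected_Ioo.prod (isPreconnected_sphere
        (by rw [Complex.rank_real_complex]; norm_num) 0 1)
    have h2 : A = (fun p : ℝ × ℂ => p.1 • p.2) '' ((Set.Ioo r R) ×ˢ (sphere (0:ℂ) 1)) := by
      ext z
      constructor
      · rintro ⟨h1z, h2z⟩
        have hz0 : ‖z‖ ≠ 0 := (hr.trans h1z).ne'
        refine ⟨(‖z‖, (‖z‖)⁻¹ • z), ⟨⟨h1z, h2z⟩, ?_⟩, ?_⟩
        · rw [mem_sphere_zero_iff_norm, norm_smul, Real.norm_eq_abs,
            _root_.abs_of_nonneg (inv_nonneg.2 (norm_nonneg z)), inv_mul_cancel₀ hz0]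
        · simp only [smul_smul]
          rw [mul_inv_cancel₀ hz0, one_smul]
      · rintro ⟨⟨t, w⟩, ⟨⟨ht1, ht2⟩, hw⟩, rfl⟩
        rw [mem_sphere_zero_iff_norm] at hw
        have ht0 : 0 < t := hr.trans ht1
        have habs : ‖t • w‖ = t := by
          rw [norm_smul, hw, mul_one, Real.norm_eq_abs, abs_of_pos ht0]
        exact ⟨by rw [habs]; exact ht1, by rw [habs]; exact ht2⟩
    rw [h2]
    exact h1.image _ (continuous_fst.smul continuous_snd).continuousOn
  have hKne : K.Nonempty := by
    refine ⟨(((r+R)/2 : ℝ) : ℂ), ?_, ?_⟩ <;>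
      simp only [Complex.norm_real, Real.norm_eq_abs] <;> rw [abs_of_pos (by linarith)] <;> linarith
  obtain ⟨z₀, hz₀K, hmax'⟩ := hKcpt.exists_isMaxOn hKne hkc
  have hmax : ∀ z ∈ K, k z ≤ k z₀ := fun z hz => hmax' hz
  set M := k z₀ with hM
  suffices hMle : M ≤ 0 by
    intro z hz
    exact le_trans (hmax z hz) hMle
  by_contra hMpos
  push_neg at hMpos
  have hz₀A : z₀ ∈ A := by
    rcases lt_or_eq_of_le hz₀K.1 with h | h
    · rcases lt_or_eq_of_le hz₀K.2 with h' | h'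
      · exact ⟨h, h'⟩
      · exact absurd (hout z₀ h') (by rw [← hM]; exact hMpos.ne')
    · exact absurd (hin z₀ h.symm) (by rw [← hM]; exact hMpos.ne')
  set U : Set ℂ := {z | z ∈ A ∧ k z = M} with hU
  have hUopen : IsOpen U := by
    rw [isOpen_iff_mem_nhds]
    rintro z₁ ⟨hz₁A, hz₁M⟩
    obtain ⟨ε, hε, hball⟩ := Metric.isOpen_iff.1 hAopen z₁ hz₁A
    have hρ2 : (0:ℝ) < ε/2 := by linarith
    have hsubA : closedBall z₁ (ε/2) ⊆ A := fun x hx =>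
      hball (lt_of_le_of_lt (mem_closedBall.1 hx) (by linarith))
    have hmvp := circle_avg_const hAopen hk2 hF hFk hρ2 hsubA
    refine Filter.mem_of_superset (Metric.ball_mem_nhds z₁ hρ2) ?_
    intro w hw
    have hwA : w ∈ A := hsubA (ball_subset_closedBall hw)
    rcases eq_or_ne w z₁ with rfl | hne
    · exact ⟨hwA, hz₁M⟩
    · have htpos : 0 < dist w z₁ := dist_pos.2 hne
      set t := dist w z₁ with ht
      have htρ : t < ε/2 := mem_ball.1 hw
      have hcircle : ∀ θ : ℝ, circleMap z₁ t θ ∈ K := fun θ =>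
        hAK (hsubA (closedBall_subset_closedBall htρ.le (circleMap_mem_closedBall z₁ htpos.le θ)))
      have harg : ∃ θ ∈ Set.Icc (0:ℝ) (2*Real.pi), circleMap z₁ t θ = w := by
        have habs : (t : ℂ) * Complex.exp ((Complex.arg (w - z₁) : ℝ) * Complex.I) = w - z₁ := by
          rw [show (t:ℂ) = ((‖w - z₁‖ : ℝ) : ℂ) by rw [ht, Complex.dist_eq]]
          exact Complex.norm_mul_exp_arg_mul_I (w - z₁)
        rcases le_or_gt 0 (Complex.arg (w - z₁)) with hθ | hθ
        · refine ⟨Complex.arg (w - z₁), ⟨hθ, (Complex.arg_le_pi _).trans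
            (by linarith [Real.pi_pos])⟩, ?_⟩
          simp only [circleMap]
          rw [habs]
          ring
        · refine ⟨Complex.arg (w - z₁) + 2*Real.pi,
            ⟨by linarith [Complex.neg_pi_lt_arg (w - z₁), Real.pi_pos],
             by linarith⟩, ?_⟩
          simp only [circleMap]
          rw [Complex.ofReal_add, add_mul, Complex.exp_add]
          have h2pi : Complex.exp (((2*Real.pi : ℝ) : ℂ) * Complex.I) = 1 := by
            simpa using Complex.exp_int_mul_two_pi_mul_I 1
          rw [h2pi, mul_one, habs]
          ring
      obtain ⟨θw, hθw, hcw⟩ := harg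
      set φ : ℝ → ℝ := fun θ => M - k (circleMap z₁ t θ) with hφ
      have hφcont : Continuous φ := by
        refine continuous_const.sub ?_
        exact hkc.comp_continuous (continuous_circleMap z₁ t) hcircle
      have hφnonneg : ∀ θ, 0 ≤ φ θ := fun θ => by
        have := hmax (circleMap z₁ t θ) (hcircle θ)
        simp only [hφ]
        linarith
      have hkint : IntervalIntegrable (fun θ => k (circleMap z₁ t θ)) volume 0 (2*Real.pi) :=
        (hkc.comp_continuous (continuous_circleMap z₁ t) hcircle).intervalIntegrable 0 (2*Real.pi)
      have hφint : (∫ θ in (0:ℝ)..(2*Real.pi), φ θ) = 0 := by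
        have h1 := hmvp t htpos (by linarith)
        simp only [hφ]
        rw [intervalIntegral.integral_sub intervalIntegrable_const hkint, h1,
          intervalIntegral.integral_const, hz₁M]
        simp [smul_eq_mul]
      have hφw : φ θw = 0 := by
        by_contra hφw
        have hpos : 0 < φ θw := lt_of_le_of_ne (hφnonneg θw) (Ne.symm hφw)
        set θ' : ℝ := if θw = 0 then 2*Real.pi else θw with hθ'
        have hθ'pos : 0 < θ' := by
          rw [hθ']
          split_ifs with h0
          · positivity
          · exact lt_of_le_of_ne hθw.1 (Ne.symm h0)
        have hθ'le : θ' ≤ 2*Real.pi := by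
          rw [hθ']
          split_ifs with h0
          · exact le_refl _
          · exact hθw.2
        have hφθ' : 0 < φ θ' := by
          rw [hθ']
          split_ifs with h0
          · have : φ (2*Real.pi) = φ 0 := by
              have := periodic_circleMap z₁ t 0
              simp only [hφ, zero_add] at this ⊢
              rw [this]
            rw [this]
            rw [h0] at hpos
            exact hpos
          · exact hpos
        -- positivity near θ'
        have hev : ∀ᶠ θ in nhds θ', 0 < φ θ :=
          (hφcont.tendsto θ').eventually (eventually_gt_nhds hφθ')
        obtain ⟨δ, hδpos, hδ⟩ := Metric.eventually_nhds_iff.1 hev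
        set l := max (θ' - δ) 0 with hl
        have hlθ' : l < θ' := by
          rw [hl, max_lt_iff]
          exact ⟨by linarith, hθ'pos⟩
        have hsupp : Set.Ioo l θ' ⊆ Function.support φ ∩ Set.Ioc 0 (2*Real.pi) := by
          intro θ hθmem
          have h1 : 0 < φ θ := hδ (by
            rw [Real.dist_eq, abs_lt]
            constructor
            · have : θ' - δ ≤ l := le_max_left _ _
              linarith [hθmem.1]
            · linarith [hθmem.2])
          refine ⟨h1.ne', ⟨lt_of_le_of_lt (le_max_right _ _) hθmem.1, le_trans hθmem.2.le hθ'le⟩⟩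
        have hppos : 0 < ∫ θ in (0:ℝ)..(2*Real.pi), φ θ := by
          rw [intervalIntegral.integral_pos_iff_support_of_nonneg_ae'
            (Filter.Eventually.of_forall (fun θ => hφnonneg θ))
            (hφcont.intervalIntegrable 0 (2*Real.pi))]
          refine ⟨by positivity, ?_⟩
          refine lt_of_lt_of_le ?_ (measure_mono hsupp)
          rw [Real.volume_Ioo]
          exact ENNReal.ofReal_pos.2 (by linarith)
        rw [hφint] at hppos
        exact lt_irrefl _ hppos
      refine ⟨hwA, ?_⟩
      have : k (circleMap z₁ t θw) = M := by
        simp only [hφ] at hφw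
        linarith
      rw [← hcw]
      exact this
  -- U is relatively closed in A, hence equals A by connectedness
  have hUA : A ⊆ U := by
    refine hconn.subset_of_closure_inter_subset hUopen ⟨z₀, hz₀A, hz₀A, rfl⟩ ?_
    rintro z ⟨hzc, hzA⟩
    refine ⟨hzA, ?_⟩
    have hne : (nhdsWithin z U).NeBot := mem_closure_iff_nhdsWithin_neBot.1 hzc
    have h1 : Filter.Tendsto k (nhdsWithin z U) (nhds (k z)) :=
      ((hkc z (hAK hzA)).mono (fun x hx => hAK hx.1)).tendsto
    have h2 : Filter.Tendsto k (nhdsWithin z U) (nhds M) := by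
      refine Filter.Tendsto.congr' ?_ tendsto_const_nhds
      filter_upwards [eventually_mem_nhdsWithin] with x hx
      exact hx.2.symm
    exact tendsto_nhds_unique h1 h2
  -- contradiction with the boundary value
  have hδ2 : 0 < (R - r)/2 := by linarith
  set zn : ℕ → ℂ := fun n => ((R - ((R-r)/2)/(n+1) : ℝ) : ℂ) with hzn
  have hznA : ∀ n, zn n ∈ A := by
    intro n
    have h1 : (0:ℝ) < (n:ℝ) + 1 := by positivity
    have h2 : ((R-r)/2)/((n:ℝ)+1) ≤ (R-r)/2 := by
      rw [div_le_iff₀ h1]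
      nlinarith
    have h3 : 0 < ((R-r)/2)/((n:ℝ)+1) := by positivity
    constructor <;> simp only [hzn, Complex.norm_real, Real.norm_eq_abs] <;>
      rw [abs_of_pos (by push_cast; linarith)] <;> push_cast <;> linarith
  have htend : Filter.Tendsto zn Filter.atTop (nhds ((R:ℝ) : ℂ)) := by
    rw [hzn]
    have h1 : Filter.Tendsto (fun n : ℕ => R - ((R-r)/2)/(n+1)) Filter.atTop (nhds R) := by
      have h2 : Filter.Tendsto (fun n : ℕ => ((R-r)/2) * (1/(n+1))) Filter.atTop (nhds 0) := by
        simpa using tendsto_one_div_add_atTop_nhds_zero_nat.const_mul ((R-r)/2)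
      have h3 := h2.const_sub R
      simpa [div_eq_mul_inv, one_div, mul_comm] using h3
    exact (Complex.continuous_ofReal.tendsto R).comp h1
  have habsR : ‖((R:ℝ) : ℂ)‖ = R := by
    simp only [Complex.norm_real, Real.norm_eq_abs]
    exact abs_of_pos (hr.trans hrR)
  have hRK : ((R:ℝ) : ℂ) ∈ K := ⟨by rw [habsR]; linarith, by rw [habsR]⟩
  have hkR : k ((R:ℝ) : ℂ) = 0 := hout _ habsR
  have h1 : Filter.Tendsto (fun n => k (zn n)) Filter.atTop (nhds (k ((R:ℝ):ℂ))) := by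
    refine ((hkc _ hRK).tendsto).comp ?_
    rw [tendsto_nhdsWithin_iff]
    exact ⟨htend, Filter.Eventually.of_forall (fun n => hAK (hznA n))⟩
  have h2 : Filter.Tendsto (fun n => k (zn n)) Filter.atTop (nhds M) := by
    refine Filter.Tendsto.congr' ?_ tendsto_const_nhds
    filter_upwards with n
    exact ((hUA (hznA n)).2).symm
  have := tendsto_nhds_unique h1 h2
  rw [hkR] at this
  exact hMpos.ne this
/-- CR/holomorphy of gradient of a harmonic C² function -/
lemma F_holo {s : Set ℂ} (hs : IsOpen s) {h : ℂ → ℝ} (hh : ContDiffOn ℝ 2 h s)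
    (hl : ∀ z ∈ s, fderiv ℝ (fun w => fderiv ℝ h w 1) z 1 +
      fderiv ℝ (fun w => fderiv ℝ h w Complex.I) z Complex.I = 0) :
    DifferentiableOn ℂ
      (fun w => ((fderiv ℝ h w 1 : ℝ) : ℂ) - Complex.I * (fderiv ℝ h w Complex.I : ℝ)) s := by
  intro z hz
  have h1le : (1 : WithTop ℕ∞) + 1 ≤ 2 := by norm_num
  have hf'd : DifferentiableOn ℝ (fderiv ℝ h) s :=
    (hh.fderiv_of_isOpen hs h1le).differentiableOn one_ne_zero
  have hf'z : DifferentiableAt ℝ (fderiv ℝ h) z :=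
    (hf'd z hz).differentiableAt (hs.mem_nhds hz)
  set T := fderiv ℝ (fderiv ℝ h) z with hT
  have hTd : HasFDerivAt (fderiv ℝ h) T z := hf'z.hasFDerivAt
  have hev : ∀ᶠ y in nhds z, HasFDerivAt h (fderiv ℝ h y) y := by
    filter_upwards [hs.mem_nhds hz] with y hy
    exact ((hh.differentiableOn (by norm_num) y hy).differentiableAt (hs.mem_nhds hy)).hasFDerivAt
  have hsymm := second_derivative_symmetric_of_eventually_of_real hev hTd
  have happ : ∀ (c₀ v : ℂ), fderiv ℝ (fun w => fderiv ℝ h w c₀) z v = (T v) c₀ := by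
    intro c₀ v
    rw [fderiv_clm_apply hf'z (differentiableAt_const c₀)]
    simp
    rfl
  have hlap : (T 1) 1 + (T I) I = 0 := by
    have h2 := hl z hz
    rwa [happ 1 1, happ I I] at h2
  have hA : HasFDerivAt (fun w => (fderiv ℝ h w) 1)
      ((ContinuousLinearMap.apply ℝ ℝ (1:ℂ)).comp T) z :=
    (ContinuousLinearMap.apply ℝ ℝ (1:ℂ)).hasFDerivAt.comp z hTd
  have hB : HasFDerivAt (fun w => (fderiv ℝ h w) I)
      ((ContinuousLinearMap.apply ℝ ℝ (I:ℂ)).comp T) z :=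
    (ContinuousLinearMap.apply ℝ ℝ (I:ℂ)).hasFDerivAt.comp z hTd
  have hF : HasFDerivAt
      (fun w => ((fderiv ℝ h w 1 : ℝ) : ℂ) - Complex.I * (fderiv ℝ h w Complex.I : ℝ))
      (Complex.ofRealCLM.comp ((ContinuousLinearMap.apply ℝ ℝ (1:ℂ)).comp T) -
        I • (Complex.ofRealCLM.comp ((ContinuousLinearMap.apply ℝ ℝ (I:ℂ)).comp T))) z := by
    have hA' := Complex.ofRealCLM.hasFDerivAt.comp z hA
    have hB' := (Complex.ofRealCLM.hasFDerivAt.comp z hB).const_mul I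
    exact hA'.sub hB'
  apply (hol_of_cr hF ?_).differentiableWithinAt
  simp only [ContinuousLinearMap.sub_apply, ContinuousLinearMap.smul_apply,
    ContinuousLinearMap.coe_comp', Function.comp_apply, ContinuousLinearMap.apply_apply,
    Complex.ofRealCLM_apply, smul_eq_mul]
  apply Complex.ext <;> simp [hsymm 1 I] <;> linarith [hlap, hsymm I 1]

lemma aux_div {a : ℝ} {z : ℂ} (hz : z ≠ 0) :
    ((a * ((Complex.normSq z)⁻¹ * z.re) : ℝ) : ℂ) -
      Complex.I * ((a * ((Complex.normSq z)⁻¹ * z.im) : ℝ) : ℂ) = (a:ℂ)/z := by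
  have hns : Complex.normSq z ≠ 0 := by simpa [Complex.normSq_eq_zero] using hz
  rw [div_eq_mul_inv, Complex.inv_def]
  apply Complex.ext <;>
    simp [Complex.mul_re, Complex.mul_im, Complex.normSq_apply] <;>
    simp [Complex.normSq_apply] at hns <;>
    field_simp <;>
    ring <;>
    simp

set_option maxHeartbeats 2000000

/-- the height function of a conformally parametrized doubly connected
minimal graph between two parallel planes is h(z) = h₀ + d/2 + (d/log R²) log|z|, the
Hopf differential of f is c/z² with c = -d²/(4 (log R²)²) < 0, and
u(w) = h₀ + d/2 + 2√(-c) log|f⁻¹(w)|. -/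
theorem stmt5 (R d h₀ : ℝ) (hR : 1 < R) (hd : 0 < d) (Ω : Set ℂ) (hΩ : IsOpen Ω)
    (u : ℂ → ℝ) (hu : ContDiffOn ℝ 2 u Ω)
    (f g : ℂ → ℂ) (hf : ContDiffOn ℝ 2 f (Ann (1/R) R))
    (hfharm : ∀ z ∈ Ann (1/R) R, wzbar (fun w => wz f w) z = 0)
    (hbij : Set.BijOn f (Ann (1/R) R) Ω)
    (hfc : ContinuousOn f (Ann (1/R) R)) (hgc : ContinuousOn g Ω)
    (hg : ∀ z ∈ Ann (1/R) R, g (f z) = z) (hg' : ∀ w ∈ Ω, f (g w) = w)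
    (hlap : ∀ z ∈ Ann (1/R) R, lap (fun w => u (f w)) z = 0)
    (hconf1 : ∀ z ∈ Ann (1/R) R,
      ‖fderiv ℝ f z 1‖ ^ 2 + (fderiv ℝ (fun w => u (f w)) z 1) ^ 2 =
      ‖fderiv ℝ f z Complex.I‖ ^ 2 +
        (fderiv ℝ (fun w => u (f w)) z Complex.I) ^ 2)
    (hconf2 : ∀ z ∈ Ann (1/R) R,
      (fderiv ℝ f z 1 * (starRingEnd ℂ) (fderiv ℝ f z Complex.I)).re +
      fderiv ℝ (fun w => u (f w)) z 1 * fderiv ℝ (fun w => u (f w)) z Complex.I = 0)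
    (H : ℂ → ℝ)
    (hHcont : ContinuousOn H {z : ℂ | 1/R ≤ ‖z‖ ∧ ‖z‖ ≤ R})
    (hHeq : ∀ z ∈ Ann (1/R) R, H z = u (f z))
    (hHin : ∀ z : ℂ, ‖z‖ = 1/R → H z = h₀)
    (hHout : ∀ z : ℂ, ‖z‖ = R → H z = h₀ + d) :
    (∀ z ∈ Ann (1/R) R,
        u (f z) = h₀ + d / 2 + (d / Real.log (R ^ 2)) * Real.log (‖z‖)) ∧
    (∀ z ∈ Ann (1/R) R,
        wz f z * (starRingEnd ℂ) (wzbar f z) =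
          ((-d ^ 2 / (4 * (Real.log (R ^ 2)) ^ 2) : ℝ) : ℂ) / z ^ 2) ∧
    (-d ^ 2 / (4 * (Real.log (R ^ 2)) ^ 2) : ℝ) < 0 ∧
    (∀ w ∈ Ω, u w = h₀ + d / 2 +
        2 * Real.sqrt (-(-d ^ 2 / (4 * (Real.log (R ^ 2)) ^ 2))) *
          Real.log (‖g w‖)) := by

  have hR0 : (0:ℝ) < R := lt_trans one_pos hR
  have hrpos : (0:ℝ) < 1/R := by positivity
  have hrR : 1/R < R := by
    rw [div_lt_iff₀ hR0]
    nlinarith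
  have hlogR : 0 < Real.log R := Real.log_pos hR
  have hL2 : Real.log (R^2) = 2 * Real.log R := by
    rw [Real.log_pow]
    push_cast
    ring
  set L : ℝ := Real.log (R^2) with hLdef
  have hLpos : 0 < L := by rw [hL2]; positivity
  set a : ℝ := d / L with hadef
  have hapos : 0 < a := by positivity
  have halog : a * Real.log R = d / 2 := by
    rw [hadef, hL2]
    field_simp
  set K : Set ℂ := {z : ℂ | 1/R ≤ ‖z‖ ∧ ‖z‖ ≤ R} with hKdef
  have hAopen : IsOpen (Ann (1/R) R) := by
    have h : Ann (1/R) R = (fun z : ℂ => ‖z‖) ⁻¹' (Set.Ioo (1/R) R) := rfl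
    rw [h]
    exact isOpen_Ioo.preimage continuous_norm
  have hAK : Ann (1/R) R ⊆ K := fun z hz => ⟨hz.1.le, hz.2.le⟩
  have hAne : ∀ z ∈ Ann (1/R) R, z ≠ 0 := by
    rintro z hz rfl
    have h1 : (1:ℝ)/R < 0 := by simpa using hz.1
    linarith
  set ρf : ℂ → ℝ := fun z => h₀ + d/2 + a * Real.log (‖z‖) with hρdef
  have hh2 : ContDiffOn ℝ 2 (fun w => u (f w)) (Ann (1/R) R) := hu.comp hf hbij.mapsTo
  -- derivative of ρf
  have hρder : ∀ z : ℂ, z ≠ 0 → HasFDerivAt ρf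
      (a • ((Complex.normSq z)⁻¹ • (z.re • Complex.reCLM + z.im • Complex.imCLM))) z := by
    intro z hz
    exact ((hasFDerivAt_logabs hz).const_mul a).const_add (h₀ + d/2)
  -- ρf is C²
  have hρ2 : ContDiffOn ℝ 2 ρf (Ann (1/R) R) := by
    intro z hz
    have hz0 : Complex.normSq z ≠ 0 := by
      simpa [Complex.normSq_eq_zero] using hAne z hz
    have hns : ContDiff ℝ 2 Complex.normSq := by
      have h1 : ContDiff ℝ 2 (fun w : ℂ => w.re * w.re + w.im * w.im) := by
        exact ((Complex.reCLM.contDiff.mul Complex.reCLM.contDiff).add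
          (Complex.imCLM.contDiff.mul Complex.imCLM.contDiff))
      have h2 : Complex.normSq = fun w : ℂ => w.re * w.re + w.im * w.im := by
        funext w
        exact Complex.normSq_apply w
      rw [h2]
      exact h1
    have hlogAt : ContDiffAt ℝ 2 Real.log (Complex.normSq z) :=
      Real.contDiffAt_log.2 hz0
    have hcomp : ContDiffAt ℝ 2 (fun w : ℂ => Real.log (Complex.normSq w)) z :=
      hlogAt.comp z hns.contDiffAt
    have heq : ρf = fun w => (h₀ + d/2) + (a/2) * Real.log (Complex.normSq w) := by
      funext w
      rw [hρdef]
      simp only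
      rw [Complex.norm_def, Real.log_sqrt (Complex.normSq_nonneg w)]
      ring
    rw [heq]
    exact (contDiffAt_const.add (contDiffAt_const.mul hcomp)).contDiffWithinAt
  -- continuity of ρf on K
  have hρcont : ContinuousOn ρf K := by
    intro z hz
    have hz0 : ‖z‖ ≠ 0 := (lt_of_lt_of_le hrpos hz.1).ne'
    exact (continuousAt_const.add (continuousAt_const.mul
      ((Real.continuousAt_log hz0).comp continuous_norm.continuousAt))).continuousWithinAt
  -- the holomorphic gradient of h
  set Fh : ℂ → ℂ := fun z => ((fderiv ℝ (fun w => u (f w)) z 1 : ℝ) : ℂ) -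
    Complex.I * (fderiv ℝ (fun w => u (f w)) z Complex.I : ℝ) with hFhdef
  have hFhhol : DifferentiableOn ℂ Fh (Ann (1/R) R) := by
    refine F_holo hAopen hh2 ?_
    intro z hz
    have h1 := hlap z hz
    simpa [lap] using h1
  -- the difference function and its data
  set kf : ℂ → ℝ := fun z => H z - ρf z with hkfdef
  have hkfcont : ContinuousOn kf K := hHcont.sub hρcont
  have hkf2 : ContDiffOn ℝ 2 kf (Ann (1/R) R) := by
    refine (hh2.sub hρ2).congr ?_
    intro z hz
    simp only [hkfdef]
    rw [hHeq z hz]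
  have hkfder : ∀ z ∈ Ann (1/R) R, fderiv ℝ kf z = fderiv ℝ (fun w => u (f w)) z -
      (a • ((Complex.normSq z)⁻¹ • (z.re • Complex.reCLM + z.im • Complex.imCLM))) := by
    intro z hz
    have hev : kf =ᶠ[nhds z] (fun w => u (f w) - ρf w) := by
      filter_upwards [hAopen.mem_nhds hz] with w hw
      simp only [hkfdef]
      rw [hHeq w hw]
    have hdh : DifferentiableAt ℝ (fun w => u (f w)) z :=
      (hh2.differentiableOn two_ne_zero z hz).differentiableAt (hAopen.mem_nhds hz)
    rw [hev.fderiv_eq, fderiv_fun_sub hdh (hρder z (hAne z hz)).differentiableAt,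
      (hρder z (hAne z hz)).fderiv]
  set Fk : ℂ → ℂ := fun z => Fh z - (a:ℂ)/z with hFkdef
  have hFkhol : DifferentiableOn ℂ Fk (Ann (1/R) R) := by
    refine hFhhol.sub ?_
    intro z hz
    exact ((differentiableAt_const _).div differentiableAt_id (hAne z hz)).differentiableWithinAt
  have hFkk : ∀ z ∈ Ann (1/R) R,
      Fk z = ((fderiv ℝ kf z 1 : ℝ) : ℂ) - Complex.I * (fderiv ℝ kf z Complex.I : ℝ) := by
    intro z hz
    rw [hkfder z hz]
    have h1 : (fderiv ℝ (fun w => u (f w)) z -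
        (a • ((Complex.normSq z)⁻¹ • (z.re • Complex.reCLM + z.im • Complex.imCLM)))) 1 =
        fderiv ℝ (fun w => u (f w)) z 1 - a * ((Complex.normSq z)⁻¹ * z.re) := by
      simp [mul_assoc]
    have h2 : (fderiv ℝ (fun w => u (f w)) z -
        (a • ((Complex.normSq z)⁻¹ • (z.re • Complex.reCLM + z.im • Complex.imCLM)))) Complex.I =
        fderiv ℝ (fun w => u (f w)) z Complex.I - a * ((Complex.normSq z)⁻¹ * z.im) := by
      simp [mul_assoc]
    rw [h1, h2, hFkdef]
    simp only [hFhdef]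
    rw [← aux_div (hAne z hz)]
    push_cast
    ring
  -- boundary values of kf
  have hbin : ∀ z : ℂ, ‖z‖ = 1/R → kf z = 0 := by
    intro z hz
    simp only [hkfdef, hρdef]
    rw [hHin z hz, hz, one_div, Real.log_inv]
    linarith [halog]
  have hbout : ∀ z : ℂ, ‖z‖ = R → kf z = 0 := by
    intro z hz
    simp only [hkfdef, hρdef]
    rw [hHout z hz, hz]
    linarith [halog]
  -- maximum principle in both directions
  have hneg : ∀ z ∈ K, kf z ≤ 0 :=
    annulus_weak_max hrpos hrR hkfcont hkf2 hFkhol hFkk hbin hbout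
  have hposs : ∀ z ∈ K, -kf z ≤ 0 := by
    refine annulus_weak_max hrpos hrR hkfcont.neg hkf2.neg (hFkhol.neg) ?_
      (fun z hz => by rw [hbin z hz]; ring) (fun z hz => by rw [hbout z hz]; ring)
    intro z hz
    have h1 : fderiv ℝ (fun z => -kf z) z = -fderiv ℝ kf z := fderiv_neg
    rw [h1]
    simp only [ContinuousLinearMap.neg_apply, Pi.neg_apply]
    rw [hFkk z hz]
    push_cast
    ring
  have hHρ : ∀ z ∈ K, H z = ρf z := by
    intro z hz
    have h1 := hneg z hz
    have h2 := hposs z hz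
    simp only [hkfdef] at h1 h2
    linarith
  -- Part 1
  have part1 : ∀ z ∈ Ann (1/R) R, u (f z) = h₀ + d / 2 + a * Real.log (‖z‖) := by
    intro z hz
    rw [← hHeq z hz, hHρ z (hAK hz)]
  refine ⟨part1, ?_, ?_, ?_⟩
  -- Part 2
  · intro z hz
    have hz0 := hAne z hz
    have hfder : fderiv ℝ (fun w => u (f w)) z = fderiv ℝ ρf z := by
      apply Filter.EventuallyEq.fderiv_eq
      filter_upwards [hAopen.mem_nhds hz] with w hw
      rw [← hHeq w hw, hHρ w (hAK hw)]
    have hρfd := (hρder z hz0).fderiv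
    have hp : fderiv ℝ (fun w => u (f w)) z 1 = a * ((Complex.normSq z)⁻¹ * z.re) := by
      rw [hfder, hρfd]
      simp [mul_assoc]
    have hq : fderiv ℝ (fun w => u (f w)) z Complex.I =
        a * ((Complex.normSq z)⁻¹ * z.im) := by
      rw [hfder, hρfd]
      simp [mul_assoc]
    have hhopf := hopf_alg (fderiv ℝ f z 1) (fderiv ℝ f z Complex.I)
      (fderiv ℝ (fun w => u (f w)) z 1) (fderiv ℝ (fun w => u (f w)) z Complex.I)
      (hconf1 z hz) (hconf2 z hz)
    rw [hp, hq] at hhopf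
    rw [wz, wzbar]
    rw [hhopf, aux_div hz0]
    have hzne : z ≠ 0 := hz0
    have hLne : L ≠ 0 := hLpos.ne'
    rw [hadef]
    push_cast
    field_simp
  -- Part 3
  · have h4 : (0:ℝ) < 4 * L^2 := by positivity
    have h5 : -d^2 < 0 := by nlinarith
    exact div_neg_of_neg_of_pos h5 h4
  -- Part 4
  · intro w hw
    obtain ⟨z, hzA, rfl⟩ := hbij.surjOn hw
    rw [hg z hzA, part1 z hzA]
    have hLne : L ≠ 0 := hLpos.ne'
    have hsqrt : Real.sqrt (-(-d^2/(4*L^2))) = d/(2*L) := by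
      rw [show -(-d^2/(4*L^2)) = (d/(2*L))^2 by field_simp; ring]
      exact Real.sqrt_sq (by positivity)
    rw [hsqrt, hadef]
    ring
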